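/- For every n ≥ 2 and every k with n ≥ k ≥ 1, the sequential encoding LT_SEQ^{n,k} of the at-most-k constraint on n input variables is propagation complete. -/

import Mathlib

set_option autoImplicit false

universe u v

/-- A literal: a boolean variable together with a polarity. -/
structure Lit (V : Type u) where
  var : V
  pos : Bool

/-- The complementary literal. -/
def Lit.negate {V : Type u} (l : Lit V) : Lit V := ⟨l.var, !l.pos⟩

/-- A literal is satisfied by a total assignment. -/
def Lit.eval {V : Type u} (a : V → Bool) (l : Lit V) : Prop := a l.var = l.pos

/-- A clause is a (finite in all our uses) disjunction of a set of literals. -/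
abbrev Clause (V : Type u) := Set (Lit V)

/-- A CNF formula is a conjunction of a set of clauses. -/
abbrev CNF (V : Type u) := Set (Clause V)

/-- A clause is satisfied iff some of its literals is. -/
def Clause.Sat {V : Type u} (a : V → Bool) (C : Clause V) : Prop := ∃ l ∈ C, Lit.eval a l

/-- A CNF formula is satisfied iff all of its clauses are. -/
def CNF.Sat {V : Type u} (a : V → Bool) (φ : CNF V) : Prop := ∀ C ∈ φ, Clause.Sat a C

def CNF.Satisfiable {V : Type u} (φ : CNF V) : Prop := ∃ a : V → Bool, CNF.Sat a φ

/-- `φ ⊨ l`. -/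
def CNF.Entails {V : Type u} (φ : CNF V) (l : Lit V) : Prop :=
  ∀ a : V → Bool, CNF.Sat a φ → Lit.eval a l

/-- A partial assignment, i.e. a set of literals, is consistent if it contains
no complementary pair of literals. -/
def ConsistentPA {V : Type u} (α : Set (Lit V)) : Prop := ∀ l ∈ α, Lit.negate l ∉ α

/-- The set of unit clauses corresponding to a partial assignment `α`;
`φ ∪ paUnits α` represents `φ ∧ α`. -/
def paUnits {V : Type u} (α : Set (Lit V)) : CNF V := (fun l => ({l} : Clause V)) '' α

/-- Derivability by repeated unit resolution: from a clause `C ∋ l` and the unit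
clause `¬l` derive `C \ {l}`.  `UnitDeriv φ ∅` means `φ ⊢₁ ⊥` and
`UnitDeriv φ {l}` means `φ ⊢₁ l`. -/
inductive UnitDeriv {V : Type u} (φ : CNF V) : Clause V → Prop where
  | base {C : Clause V} : C ∈ φ → UnitDeriv φ C
  | step {C : Clause V} (l : Lit V) : l ∈ C → UnitDeriv φ C →
      UnitDeriv φ {Lit.negate l} → UnitDeriv φ (C \ {l})

/-- The set of variables occurring in a CNF formula. -/
def CNF.vars {V : Type u} (φ : CNF V) : Set V := ⋃ C ∈ φ, Lit.var '' C

/-- All literals of `α` are literals on the variables `W`. -/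
def LitsOn {V : Type u} (α : Set (Lit V)) (W : Set V) : Prop := ∀ l ∈ α, l.var ∈ W

/-- `φ` is unit refutation complete on the variables `W`. -/
def URCon {V : Type u} (φ : CNF V) (W : Set V) : Prop :=
  ∀ α : Set (Lit V), ConsistentPA α → LitsOn α W →
    ¬ CNF.Satisfiable (φ ∪ paUnits α) → UnitDeriv (φ ∪ paUnits α) ∅

/-- `φ` is propagation complete on the variables `W`. -/
def PCon {V : Type u} (φ : CNF V) (W : Set V) : Prop :=
  ∀ α : Set (Lit V), ConsistentPA α → LitsOn α W →
    ∀ l : Lit V, l.var ∈ W → CNF.Entails (φ ∪ paUnits α) l →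
      UnitDeriv (φ ∪ paUnits α) {l} ∨ UnitDeriv (φ ∪ paUnits α) ∅

/-- `φ` is a CNF encoding of the function `f` with input variables `X`
(the remaining variables of `φ` being auxiliary); `f` is assumed to depend
only on the values of the variables in `X`. -/
def IsEncodingOn {V : Type u} (φ : CNF V) (X : Set V) (f : (V → Bool) → Prop) : Prop :=
  ∀ a : V → Bool, f a ↔ ∃ b : V → Bool, (∀ x ∈ X, b x = a x) ∧ CNF.Sat b φ

/-- The positive literal on a variable. -/
def posL {V : Type u} (x : V) : Lit V := ⟨x, true⟩
/-- The negative literal on a variable. -/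
def negL {V : Type u} (x : V) : Lit V := ⟨x, false⟩

namespace Seq

/-- Variables of the sequential encoding: `Sum.inl i` is the input variable `xᵢ`
and `Sum.inr (i, j)` is the auxiliary variable `s_{i,j}`. -/
abbrev V : Type := ℕ ⊕ (ℕ × ℕ)

def X (i : ℕ) : V := Sum.inl i
def S (i j : ℕ) : V := Sum.inr (i, j)

/-- The clauses of the sequential encoding `LT_SEQ^{n,k}` (Sinz 2005) of the
at-most-`k` constraint on the input variables `x₁, …, xₙ` with auxiliary
variables `s_{i,j}`, `1 ≤ i ≤ n-1`, `1 ≤ j ≤ k`. -/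
def seqCNF (n k : ℕ) : CNF V :=
  {C | C = {negL (X 1), posL (S 1 1)}
    ∨ (∃ j, 1 < j ∧ j ≤ k ∧ C = {negL (S 1 j)})
    ∨ (∃ i, 1 < i ∧ i < n ∧
        (C = {negL (X i), posL (S i 1)}
        ∨ C = {negL (S (i-1) 1), posL (S i 1)}
        ∨ (∃ j, 1 < j ∧ j ≤ k ∧
            (C = {negL (X i), negL (S (i-1) (j-1)), posL (S i j)}
            ∨ C = {negL (S (i-1) j), posL (S i j)}))
        ∨ C = {negL (X i), negL (S (i-1) k)}))
    ∨ C = {negL (X n), negL (S (n-1) k)}}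

/-- The input variables of `LT_SEQ^{n,k}`. -/
def inputs (n : ℕ) : Set V := {w | ∃ i, 1 ≤ i ∧ i ≤ n ∧ w = X i}

/-- All the variables (input and auxiliary) of `LT_SEQ^{n,k}`. -/
def allVars (n k : ℕ) : Set V :=
  inputs n ∪ {w | ∃ i j, 1 ≤ i ∧ i ≤ n - 1 ∧ 1 ≤ j ∧ j ≤ k ∧ w = S i j}

/-- The at-most-`k` constraint on the input variables `x₁, …, xₙ`. -/
def atMostK (n k : ℕ) (a : V → Bool) : Prop :=
  ((Finset.Icc 1 n).filter (fun i => a (X i) = true)).card ≤ k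

end Seq
namespace SeqAux
open Seq

/-! ### Generic helpers -/

lemma neg_negate (w : V) : (negL w).negate = posL w := rfl
lemma pos_negate (w : V) : (posL w).negate = negL w := rfl

lemma bfalse {a : Bool} (h : ¬ a = true) : a = false := by cases a <;> simp_all

lemma sat1 {a : V → Bool} {l : Lit V} (h : Lit.eval a l) : Clause.Sat a {l} := ⟨l, rfl, h⟩

lemma sat2L {a : V → Bool} {l1 l2 : Lit V} (h : Lit.eval a l1) :
    Clause.Sat a {l1, l2} := ⟨l1, Set.mem_insert _ _, h⟩

lemma sat2R {a : V → Bool} {l1 l2 : Lit V} (h : Lit.eval a l2) :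
    Clause.Sat a {l1, l2} := ⟨l2, Set.mem_insert_of_mem _ rfl, h⟩

lemma sat3_1 {a : V → Bool} {l1 l2 l3 : Lit V} (h : Lit.eval a l1) :
    Clause.Sat a {l1, l2, l3} := ⟨l1, Set.mem_insert _ _, h⟩

lemma sat3_2 {a : V → Bool} {l1 l2 l3 : Lit V} (h : Lit.eval a l2) :
    Clause.Sat a {l1, l2, l3} := ⟨l2, Set.mem_insert_of_mem _ (Set.mem_insert _ _), h⟩

lemma sat3_3 {a : V → Bool} {l1 l2 l3 : Lit V} (h : Lit.eval a l3) :
    Clause.Sat a {l1, l2, l3} := ⟨l3, Set.mem_insert_of_mem _ (Set.mem_insert_of_mem _ rfl), h⟩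

lemma elim2 {a : V → Bool} {l1 l2 : Lit V} (h : Clause.Sat a {l1, l2}) :
    Lit.eval a l1 ∨ Lit.eval a l2 := by
  obtain ⟨l, hl, he⟩ := h
  rcases hl with rfl | hl
  · exact Or.inl he
  · rcases hl with rfl; exact Or.inr he

lemma elim3 {a : V → Bool} {l1 l2 l3 : Lit V} (h : Clause.Sat a {l1, l2, l3}) :
    Lit.eval a l1 ∨ Lit.eval a l2 ∨ Lit.eval a l3 := by
  obtain ⟨l, hl, he⟩ := h
  rcases hl with rfl | rfl | rfl
  · exact Or.inl he
  · exact Or.inr (Or.inl he)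
  · exact Or.inr (Or.inr he)

/-! ### Unit resolution helpers -/

lemma deriveBot {ψ : CNF V} {l : Lit V} (h1 : UnitDeriv ψ {l})
    (h2 : UnitDeriv ψ {l.negate}) : UnitDeriv ψ ∅ := by
  have := UnitDeriv.step (C := {l}) l rfl h1 h2
  simpa using this

lemma deriveUnit2 {ψ : CNF V} {A B : Lit V} (hne : B ≠ A)
    (hC : UnitDeriv ψ {A, B}) (hA : UnitDeriv ψ {A.negate}) : UnitDeriv ψ {B} := by
  have := UnitDeriv.step A (Set.mem_insert _ _) hC hA
  have he : ({A, B} : Clause V) \ {A} = {B} := by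
    ext x
    constructor
    · rintro ⟨rfl | rfl, hx⟩
      · exact absurd rfl hx
      · rfl
    · rintro rfl; exact ⟨Or.inr rfl, fun hx => hne (by simpa using hx)⟩
  rwa [he] at this

lemma deriveUnit3 {ψ : CNF V} {A B C : Lit V} (hBA : B ≠ A) (hCA : C ≠ A) (hCB : C ≠ B)
    (hC : UnitDeriv ψ {A, B, C}) (hA : UnitDeriv ψ {A.negate}) (hB : UnitDeriv ψ {B.negate}) :
    UnitDeriv ψ {C} := by
  have h1 := UnitDeriv.step A (Set.mem_insert _ _) hC hA
  have he : ({A, B, C} : Clause V) \ {A} = {B, C} := by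
    ext x
    constructor
    · rintro ⟨rfl | rfl | rfl, hx⟩
      · exact absurd rfl hx
      · exact Or.inl rfl
      · exact Or.inr rfl
    · rintro (rfl | rfl)
      · exact ⟨Or.inr (Or.inl rfl), fun hx => hBA (by simpa using hx)⟩
      · exact ⟨Or.inr (Or.inr rfl), fun hx => hCA (by simpa using hx)⟩
  rw [he] at h1
  exact deriveUnit2 hCB h1 hB

lemma pair_comm' (A B : Lit V) : ({A, B} : Clause V) = {B, A} := Set.pair_comm A B

lemma triple_rot (A B C : Lit V) : ({A, B, C} : Clause V) = {B, C, A} := by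
  ext x; simp; tauto

lemma triple_swap23 (A B C : Lit V) : ({A, B, C} : Clause V) = {A, C, B} := by
  ext x; simp; tauto

end SeqAux
namespace SeqAux
open Seq

/-- `φ ∧ α` -/
def Phi (n k : ℕ) (α : Set (Lit V)) : CNF V := seqCNF n k ∪ paUnits α

/-- the positive literal on `w` is derivable -/
def P (n k : ℕ) (α : Set (Lit V)) (w : V) : Prop := UnitDeriv (Phi n k α) {posL w}
/-- the negative literal on `w` is derivable -/
def N (n k : ℕ) (α : Set (Lit V)) (w : V) : Prop := UnitDeriv (Phi n k α) {negL w}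

section Closure

variable {n k : ℕ} {α : Set (Lit V)}

lemma memA0 : ({negL (X 1), posL (S 1 1)} : Clause V) ∈ seqCNF n k := Or.inl rfl

lemma memB0 {j : ℕ} (h1 : 1 < j) (h2 : j ≤ k) : ({negL (S 1 j)} : Clause V) ∈ seqCNF n k :=
  Or.inr (Or.inl ⟨j, h1, h2, rfl⟩)

lemma memC0 {i : ℕ} (h1 : 1 < i) (h2 : i < n) :
    ({negL (X i), posL (S i 1)} : Clause V) ∈ seqCNF n k :=
  Or.inr (Or.inr (Or.inl ⟨i, h1, h2, Or.inl rfl⟩))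

lemma memD0 {i : ℕ} (h1 : 1 < i) (h2 : i < n) :
    ({negL (S (i-1) 1), posL (S i 1)} : Clause V) ∈ seqCNF n k :=
  Or.inr (Or.inr (Or.inl ⟨i, h1, h2, Or.inr (Or.inl rfl)⟩))

lemma memE0 {i j : ℕ} (h1 : 1 < i) (h2 : i < n) (h3 : 1 < j) (h4 : j ≤ k) :
    ({negL (X i), negL (S (i-1) (j-1)), posL (S i j)} : Clause V) ∈ seqCNF n k :=
  Or.inr (Or.inr (Or.inl ⟨i, h1, h2, Or.inr (Or.inr (Or.inl ⟨j, h3, h4, Or.inl rfl⟩))⟩))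

lemma memF0 {i j : ℕ} (h1 : 1 < i) (h2 : i < n) (h3 : 1 < j) (h4 : j ≤ k) :
    ({negL (S (i-1) j), posL (S i j)} : Clause V) ∈ seqCNF n k :=
  Or.inr (Or.inr (Or.inl ⟨i, h1, h2, Or.inr (Or.inr (Or.inl ⟨j, h3, h4, Or.inr rfl⟩))⟩))

lemma memG0 {i : ℕ} (h1 : 1 < i) (h2 : i < n) :
    ({negL (X i), negL (S (i-1) k)} : Clause V) ∈ seqCNF n k :=
  Or.inr (Or.inr (Or.inl ⟨i, h1, h2, Or.inr (Or.inr (Or.inr rfl))⟩))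

lemma memH0 : ({negL (X n), negL (S (n-1) k)} : Clause V) ∈ seqCNF n k :=
  Or.inr (Or.inr (Or.inr rfl))

lemma memA : ({negL (X 1), posL (S 1 1)} : Clause V) ∈ Phi n k α :=
  Set.mem_union_left _ memA0

lemma memB {j : ℕ} (h1 : 1 < j) (h2 : j ≤ k) : ({negL (S 1 j)} : Clause V) ∈ Phi n k α :=
  Set.mem_union_left _ (memB0 h1 h2)

lemma memC {i : ℕ} (h1 : 1 < i) (h2 : i < n) :
    ({negL (X i), posL (S i 1)} : Clause V) ∈ Phi n k α :=
  Set.mem_union_left _ (memC0 h1 h2)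

lemma memD {i : ℕ} (h1 : 1 < i) (h2 : i < n) :
    ({negL (S (i-1) 1), posL (S i 1)} : Clause V) ∈ Phi n k α :=
  Set.mem_union_left _ (memD0 h1 h2)

lemma memE {i j : ℕ} (h1 : 1 < i) (h2 : i < n) (h3 : 1 < j) (h4 : j ≤ k) :
    ({negL (X i), negL (S (i-1) (j-1)), posL (S i j)} : Clause V) ∈ Phi n k α :=
  Set.mem_union_left _ (memE0 h1 h2 h3 h4)

lemma memF {i j : ℕ} (h1 : 1 < i) (h2 : i < n) (h3 : 1 < j) (h4 : j ≤ k) :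
    ({negL (S (i-1) j), posL (S i j)} : Clause V) ∈ Phi n k α :=
  Set.mem_union_left _ (memF0 h1 h2 h3 h4)

lemma memG {i : ℕ} (h1 : 1 < i) (h2 : i < n) :
    ({negL (X i), negL (S (i-1) k)} : Clause V) ∈ Phi n k α :=
  Set.mem_union_left _ (memG0 h1 h2)

lemma memH : ({negL (X n), negL (S (n-1) k)} : Clause V) ∈ Phi n k α :=
  Set.mem_union_left _ memH0

lemma memPA {l : Lit V} (hl : l ∈ α) : ({l} : Clause V) ∈ Phi n k α :=
  Set.mem_union_right _ ⟨l, hl, rfl⟩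

lemma Ualpha {l : Lit V} (hl : l ∈ α) : UnitDeriv (Phi n k α) {l} :=
  UnitDeriv.base (memPA hl)

/-- literal inequality by variable -/
lemma ne_PN {w w' : V} : (posL w : Lit V) ≠ negL w' := by simp [posL, negL]
lemma ne_NP {w w' : V} : (negL w : Lit V) ≠ posL w' := by simp [posL, negL]
lemma ne_NXS {i i' j' : ℕ} : (negL (X i) : Lit V) ≠ negL (S i' j') := by simp [posL, negL, X, S]
lemma ne_NSX {i i' j' : ℕ} : (negL (S i' j') : Lit V) ≠ negL (X i) := by simp [posL, negL, X, S]
lemma ne_PSNX {i i' j' : ℕ} : (posL (S i' j') : Lit V) ≠ negL (X i) := ne_PN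

lemma notBoth {w : V} (hbot : ¬ UnitDeriv (Phi n k α) ∅)
    (hp : P n k α w) (hn : N n k α w) : False :=
  hbot (deriveBot (l := posL w) hp hn)

/-- clause A/C positive propagation: `x_i → s_{i,1}` -/
lemma P1 (hn2 : 2 ≤ n) {i : ℕ} (hi1 : 1 ≤ i) (hi2 : i < n)
    (hx : P n k α (X i)) : P n k α (S i 1) := by
  rcases Nat.lt_or_ge 1 i with h | h
  · exact deriveUnit2 ne_PN (UnitDeriv.base (memC h hi2)) hx
  · have : i = 1 := le_antisymm h hi1
    subst this
    exact deriveUnit2 ne_PN (UnitDeriv.base memA) hx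

/-- clause A/C negative propagation: `¬s_{i,1} → ¬x_i` -/
lemma P2 (hn2 : 2 ≤ n) {i : ℕ} (hi1 : 1 ≤ i) (hi2 : i < n)
    (hs : N n k α (S i 1)) : N n k α (X i) := by
  rcases Nat.lt_or_ge 1 i with h | h
  · have hc := UnitDeriv.base (φ := Phi n k α) (memC h hi2)
    rw [pair_comm'] at hc
    exact deriveUnit2 ne_NP hc hs
  · have : i = 1 := le_antisymm h hi1
    subst this
    have hc := UnitDeriv.base (φ := Phi n k α) (memA (n := n) (k := k) (α := α))
    rw [pair_comm'] at hc
    exact deriveUnit2 ne_NP hc hs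

/-- clause D/F positive: `s_{i-1,j} → s_{i,j}` -/
lemma P3p {i j : ℕ} (hi1 : 1 < i) (hi2 : i < n) (hj1 : 1 ≤ j) (hj2 : j ≤ k)
    (hs : P n k α (S (i-1) j)) : P n k α (S i j) := by
  rcases Nat.lt_or_ge 1 j with h | h
  · exact deriveUnit2 ne_PN (UnitDeriv.base (memF hi1 hi2 h hj2)) hs
  · have : j = 1 := le_antisymm h hj1
    subst this
    exact deriveUnit2 ne_PN (UnitDeriv.base (memD hi1 hi2)) hs

/-- clause D/F negative: `¬s_{i,j} → ¬s_{i-1,j}` -/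
lemma P3n {i j : ℕ} (hi1 : 1 < i) (hi2 : i < n) (hj1 : 1 ≤ j) (hj2 : j ≤ k)
    (hs : N n k α (S i j)) : N n k α (S (i-1) j) := by
  rcases Nat.lt_or_ge 1 j with h | h
  · have hc := UnitDeriv.base (φ := Phi n k α) (memF hi1 hi2 h hj2)
    rw [pair_comm'] at hc
    exact deriveUnit2 ne_NP hc hs
  · have : j = 1 := le_antisymm h hj1
    subst this
    have hc := UnitDeriv.base (φ := Phi n k α) (memD hi1 hi2)
    rw [pair_comm'] at hc
    exact deriveUnit2 ne_NP hc hs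

/-- clause E positive: `x_i ∧ s_{i-1,j-1} → s_{i,j}` -/
lemma P4a {i j : ℕ} (hi1 : 1 < i) (hi2 : i < n) (hj1 : 1 < j) (hj2 : j ≤ k)
    (hx : P n k α (X i)) (hs : P n k α (S (i-1) (j-1))) : P n k α (S i j) :=
  deriveUnit3 ne_NSX ne_PN ne_PN (UnitDeriv.base (memE hi1 hi2 hj1 hj2)) hx hs

/-- clause E: `x_i ∧ ¬s_{i,j} → ¬s_{i-1,j-1}` -/
lemma P4b {i j : ℕ} (hi1 : 1 < i) (hi2 : i < n) (hj1 : 1 < j) (hj2 : j ≤ k)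
    (hx : P n k α (X i)) (hs : N n k α (S i j)) : N n k α (S (i-1) (j-1)) := by
  have hc := UnitDeriv.base (φ := Phi n k α) (memE hi1 hi2 hj1 hj2)
  rw [triple_swap23] at hc
  exact deriveUnit3 ne_PSNX ne_NSX ne_NP hc hx hs

/-- clause E: `s_{i-1,j-1} ∧ ¬s_{i,j} → ¬x_i` -/
lemma P4c {i j : ℕ} (hi1 : 1 < i) (hi2 : i < n) (hj1 : 1 < j) (hj2 : j ≤ k)
    (hs' : P n k α (S (i-1) (j-1))) (hs : N n k α (S i j)) : N n k α (X i) := by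
  have hc := UnitDeriv.base (φ := Phi n k α) (memE hi1 hi2 hj1 hj2)
  rw [triple_rot] at hc
  exact deriveUnit3 ne_PN ne_NXS ne_NP hc hs' hs

/-- clause G/H: `x_i → ¬s_{i-1,k}` -/
lemma P5a {i : ℕ} (hi1 : 1 < i) (hi2 : i ≤ n)
    (hx : P n k α (X i)) : N n k α (S (i-1) k) := by
  rcases Nat.lt_or_ge i n with h | h
  · exact deriveUnit2 ne_NSX (UnitDeriv.base (memG hi1 h)) hx
  · have hin : i = n := le_antisymm hi2 h
    rw [hin] at hx ⊢
    exact deriveUnit2 ne_NSX (UnitDeriv.base memH) hx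

/-- clause G/H: `s_{i-1,k} → ¬x_i` -/
lemma P5b {i : ℕ} (hi1 : 1 < i) (hi2 : i ≤ n)
    (hs : P n k α (S (i-1) k)) : N n k α (X i) := by
  rcases Nat.lt_or_ge i n with h | h
  · have hc := UnitDeriv.base (φ := Phi n k α) (memG hi1 h)
    rw [pair_comm'] at hc
    exact deriveUnit2 ne_NXS hc hs
  · have hin : i = n := le_antisymm hi2 h
    rw [hin] at hs ⊢
    have hc := UnitDeriv.base (φ := Phi n k α) (memH (n := n) (k := k) (α := α))
    rw [pair_comm'] at hc
    exact deriveUnit2 ne_NXS hc hs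

/-- clause B: `¬s_{1,j}` for `1 < j ≤ k` -/
lemma Bunit {j : ℕ} (hj1 : 1 < j) (hj2 : j ≤ k) : N n k α (S 1 j) :=
  UnitDeriv.base (memB hj1 hj2)

end Closure
end SeqAux
namespace SeqAux
open Seq

/-- Master lemma: an assignment respecting the derivable units and the
positive/at-most propagation conditions satisfies `φ ∧ α`. -/
lemma satOf {n k : ℕ} {α : Set (Lit V)} (hn2 : 2 ≤ n) (hk1 : 1 ≤ k) (b : V → Bool)
    (hpos : ∀ w, P n k α w → b w = true)
    (hneg : ∀ w, N n k α w → b w = false)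
    (h1 : ∀ i, 1 ≤ i → i < n → b (X i) = true → b (S i 1) = true)
    (h3 : ∀ i j, 1 < i → i < n → 1 ≤ j → j ≤ k → b (S (i-1) j) = true → b (S i j) = true)
    (h4 : ∀ i j, 1 < i → i < n → 1 < j → j ≤ k →
        b (X i) = true → b (S (i-1) (j-1)) = true → b (S i j) = true)
    (h5 : ∀ i, 1 < i → i ≤ n → b (X i) = true → b (S (i-1) k) = false) :
    CNF.Sat b (Phi n k α) := by
  intro C hC
  rcases hC with hC | ⟨l, hl, rfl⟩
  · simp only [seqCNF, Set.mem_setOf_eq] at hC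
    rcases hC with rfl | ⟨j, hj1, hj2, rfl⟩ | ⟨i, hi1, hi2, hC⟩ | rfl
    · -- clause A
      by_cases hx : b (X 1) = true
      · exact sat2R (show Lit.eval b (posL (S 1 1)) from h1 1 le_rfl (by omega) hx)
      · exact sat2L (show Lit.eval b (negL (X 1)) from bfalse hx)
    · -- clause B
      exact sat1 (show Lit.eval b (negL (S 1 j)) from hneg _ (Bunit hj1 hj2))
    · rcases hC with rfl | rfl | ⟨j, hj1, hj2, (rfl | rfl)⟩ | rfl
      · -- clause C
        by_cases hx : b (X i) = true
        · exact sat2R (show Lit.eval b (posL (S i 1)) from h1 i (by omega) hi2 hx)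
        · exact sat2L (show Lit.eval b (negL (X i)) from bfalse hx)
      · -- clause D
        by_cases hs : b (S (i-1) 1) = true
        · exact sat2R (show Lit.eval b (posL (S i 1)) from h3 i 1 hi1 hi2 le_rfl hk1 hs)
        · exact sat2L (show Lit.eval b (negL (S (i-1) 1)) from bfalse hs)
      · -- clause E
        by_cases hx : b (X i) = true
        · by_cases hs : b (S (i-1) (j-1)) = true
          · exact sat3_3 (show Lit.eval b (posL (S i j)) from h4 i j hi1 hi2 hj1 hj2 hx hs)
          · exact sat3_2 (show Lit.eval b (negL (S (i-1) (j-1))) from bfalse hs)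
        · exact sat3_1 (show Lit.eval b (negL (X i)) from bfalse hx)
      · -- clause F
        by_cases hs : b (S (i-1) j) = true
        · exact sat2R (show Lit.eval b (posL (S i j)) from h3 i j hi1 hi2 (by omega) hj2 hs)
        · exact sat2L (show Lit.eval b (negL (S (i-1) j)) from bfalse hs)
      · -- clause G
        by_cases hx : b (X i) = true
        · exact sat2R (show Lit.eval b (negL (S (i-1) k)) from h5 i hi1 (le_of_lt hi2) hx)
        · exact sat2L (show Lit.eval b (negL (X i)) from bfalse hx)
    · -- clause H
      by_cases hx : b (X n) = true
      · exact sat2R (show Lit.eval b (negL (S (n-1) k)) from h5 n (by omega) le_rfl hx)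
      · exact sat2L (show Lit.eval b (negL (X n)) from bfalse hx)
  · -- unit clauses from α
    refine sat1 ?_
    obtain ⟨w, pol⟩ := l
    cases pol
    · exact hneg w (Ualpha hl)
    · exact hpos w (Ualpha hl)
end SeqAux
namespace SeqAux
open Seq

lemma beq_false_iff {x : Bool} {p : Prop} (h : x = true ↔ p) : x = false ↔ ¬ p := by
  cases x <;> simp_all

/-- one forward step of the "junk" propagation on the auxiliary grid -/
def Rstep (n k : ℕ) (α : Set (Lit V)) (p q : ℕ × ℕ) : Prop :=
  1 ≤ p.1 ∧ 1 ≤ p.2 ∧ q.1 = p.1 + 1 ∧ q.1 < n ∧ q.2 ≤ k ∧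
    (q.2 = p.2 ∨ (q.2 = p.2 + 1 ∧ P n k α (X q.1)))

section CM

variable {n k : ℕ} {α : Set (Lit V)}

lemma rtc_range {p q : ℕ × ℕ} (h : Relation.ReflTransGen (Rstep n k α) p q)
    (hp : 1 ≤ p.1 ∧ p.1 < n ∧ 1 ≤ p.2 ∧ p.2 ≤ k) :
    1 ≤ q.1 ∧ q.1 < n ∧ 1 ≤ q.2 ∧ q.2 ≤ k := by
  induction h with
  | refl => exact hp
  | tail hab hbc ih =>
    obtain ⟨h1, h2, h3, h4, h5, h6⟩ := hbc
    obtain ⟨i1, i2, i3, i4⟩ := ih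
    rcases h6 with h6 | ⟨h6, -⟩ <;> exact ⟨by omega, by omega, by omega, by omega⟩

lemma rtc_mono {p q : ℕ × ℕ} (h : Relation.ReflTransGen (Rstep n k α) p q) :
    p.1 ≤ q.1 := by
  induction h with
  | refl => exact le_refl _
  | tail hab hbc ih =>
    obtain ⟨h1, h2, h3, h4, h5, h6⟩ := hbc
    omega

/-- pulling a derivable negative unit backwards along a junk chain -/
lemma rtc_pull {p q : ℕ × ℕ}
    (hp : 1 ≤ p.1 ∧ p.1 < n ∧ 1 ≤ p.2 ∧ p.2 ≤ k)
    (h : Relation.ReflTransGen (Rstep n k α) p q) :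
    N n k α (S q.1 q.2) → N n k α (S p.1 p.2) := by
  induction h with
  | refl => exact id
  | @tail b c hab hbc ih =>
    intro hN
    apply ih
    have hb := rtc_range hab hp
    obtain ⟨h1, h2, h3, h4, h5, h6⟩ := hbc
    rcases h6 with h6 | ⟨h6, hx⟩
    · have := P3n (i := c.1) (j := c.2) (by omega) h4 (by omega) h5 hN
      rw [show c.1 - 1 = b.1 by omega, h6] at this
      exact this
    · have := P4b (i := c.1) (j := c.2) (by omega) h4 (by omega) h5 hx hN
      rw [show c.1 - 1 = b.1 by omega, show c.2 - 1 = b.2 by omega] at this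
      exact this

end CM
end SeqAux
namespace SeqAux
open Seq

/-- junk set for falsifying `¬s_{i0,j0}` -/
abbrev J2 (n k : ℕ) (α : Set (Lit V)) (i0 j0 : ℕ) (p : ℕ × ℕ) : Prop :=
  Relation.ReflTransGen (Rstep n k α) (i0, j0) p

/-- seeds of the junk set for falsifying `¬x_{i0}` -/
abbrev SeedP (n k : ℕ) (α : Set (Lit V)) (i0 : ℕ) (q : ℕ × ℕ) : Prop :=
  q.1 = i0 ∧ i0 < n ∧
    (q.2 = 1 ∨ (2 ≤ i0 ∧ 2 ≤ q.2 ∧ q.2 ≤ k ∧ P n k α (S (i0-1) (q.2-1))))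

/-- junk set for falsifying `¬x_{i0}` -/
abbrev J3 (n k : ℕ) (α : Set (Lit V)) (i0 : ℕ) (p : ℕ × ℕ) : Prop :=
  ∃ q, SeedP n k α i0 q ∧ Relation.ReflTransGen (Rstep n k α) q p

lemma Rstep.mk' {n k : ℕ} {α : Set (Lit V)} {a b c d : ℕ}
    (h1 : 1 ≤ a) (h2 : 1 ≤ b) (h3 : c = a + 1) (h4 : c < n) (h5 : d ≤ k)
    (h6 : d = b ∨ (d = b + 1 ∧ P n k α (X c))) : Rstep n k α (a, b) (c, d) :=
  ⟨h1, h2, h3, h4, h5, h6⟩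

lemma pcon {n k : ℕ} (hn2 : 2 ≤ n) (hk1 : 1 ≤ k) :
    PCon (seqCNF n k) (allVars n k) := by
  intro α hcons hon l hlv hent
  classical
  by_cases hbot : UnitDeriv (Phi n k α) ∅
  · exact Or.inr hbot
  · left
    show UnitDeriv (Phi n k α) {l}
    by_contra hlU
    obtain ⟨w, pol⟩ := l
    simp only [allVars, inputs, Set.mem_union, Set.mem_setOf_eq] at hlv
    cases pol with
    | true =>
      -- countermodel: the minimal model
      set b : Seq.V → Bool := fun w => decide (P n k α w) with hbdef
      have hbT : ∀ w, b w = true ↔ P n k α w := by intro w; simp [hbdef]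
      have hbF : ∀ w, b w = false ↔ ¬ P n k α w := fun w => beq_false_iff (hbT w)
      have hsat : CNF.Sat b (Phi n k α) := by
        refine satOf hn2 hk1 b ?_ ?_ ?_ ?_ ?_ ?_
        · exact fun w hw => (hbT w).mpr hw
        · exact fun w hw => (hbF w).mpr (fun hp => notBoth hbot hp hw)
        · intro i hi1 hi2 hx
          exact (hbT _).mpr (P1 hn2 hi1 hi2 ((hbT _).mp hx))
        · intro i j hi1 hi2 hj1 hj2 hs
          exact (hbT _).mpr (P3p hi1 hi2 hj1 hj2 ((hbT _).mp hs))
        · intro i j hi1 hi2 hj1 hj2 hx hs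
          exact (hbT _).mpr (P4a hi1 hi2 hj1 hj2 ((hbT _).mp hx) ((hbT _).mp hs))
        · intro i hi1 hi2 hx
          exact (hbF _).mpr (fun hp => notBoth hbot hp (P5a hi1 hi2 ((hbT _).mp hx)))
      have he := hent b hsat
      exact hlU ((hbT w).mp he)
    | false =>
      cases w with
      | inr p =>
        obtain ⟨i0, j0⟩ := p
        have hrg : 1 ≤ i0 ∧ i0 < n ∧ 1 ≤ j0 ∧ j0 ≤ k := by
          rcases hlv with ⟨i, hi1, hi2, he⟩ | ⟨i, j, h1, h2, h3, h4, he⟩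
          · exact absurd he (by simp [X])
          · simp only [S, Sum.inr.injEq, Prod.mk.injEq] at he
            obtain ⟨rfl, rfl⟩ := he
            exact ⟨h1, by omega, h3, h4⟩
        have hJrange : ∀ p, J2 n k α i0 j0 p → 1 ≤ p.1 ∧ p.1 < n ∧ 1 ≤ p.2 ∧ p.2 ≤ k :=
          fun p hp => rtc_range hp hrg
        have hJneg : ∀ p, J2 n k α i0 j0 p → N n k α (S p.1 p.2) → False := by
          intro p hp hN
          exact hlU (rtc_pull hrg hp hN)
        set b : Seq.V → Bool :=
          Sum.elim (fun i => decide (P n k α (X i)))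
            (fun p => decide (P n k α (S p.1 p.2) ∨ J2 n k α i0 j0 p)) with hbdef
        have hbX : ∀ i, b (X i) = true ↔ P n k α (X i) := by
          intro i; simp [hbdef, X]
          exact decide_eq_true_iff
        have hbS : ∀ i j, b (S i j) = true ↔ (P n k α (S i j) ∨ J2 n k α i0 j0 (i, j)) := by
          intro i j; simp [hbdef, S]
        have hbXF : ∀ i, b (X i) = false ↔ ¬ P n k α (X i) := fun i => beq_false_iff (hbX i)
        have hbSF : ∀ i j, b (S i j) = false ↔ ¬ (P n k α (S i j) ∨ J2 n k α i0 j0 (i, j)) :=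
          fun i j => beq_false_iff (hbS i j)
        have hsat : CNF.Sat b (Phi n k α) := by
          refine satOf hn2 hk1 b ?_ ?_ ?_ ?_ ?_ ?_
          · intro w hw
            cases w with
            | inl i => exact (hbX i).mpr hw
            | inr p => exact (hbS p.1 p.2).mpr (Or.inl hw)
          · intro w hw
            cases w with
            | inl i => exact (hbXF i).mpr (fun hp => notBoth hbot hp hw)
            | inr p =>
              refine (hbSF p.1 p.2).mpr ?_
              rintro (hp | hj)
              · exact notBoth hbot hp hw
              · exact hJneg p hj hw
          · intro i hi1 hi2 hx
            exact (hbS i 1).mpr (Or.inl (P1 hn2 hi1 hi2 ((hbX i).mp hx)))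
          · intro i j hi1 hi2 hj1 hj2 hs
            rcases (hbS (i-1) j).mp hs with hp | hj
            · exact (hbS i j).mpr (Or.inl (P3p hi1 hi2 hj1 hj2 hp))
            · refine (hbS i j).mpr (Or.inr (Relation.ReflTransGen.tail hj ?_))
              have hr := hJrange _ hj
              exact Rstep.mk' hr.1 hj1 (by omega) hi2 hj2 (Or.inl rfl)
          · intro i j hi1 hi2 hj1 hj2 hx hs
            rcases (hbS (i-1) (j-1)).mp hs with hp | hj
            · exact (hbS i j).mpr (Or.inl (P4a hi1 hi2 hj1 hj2 ((hbX i).mp hx) hp))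
            · refine (hbS i j).mpr (Or.inr (Relation.ReflTransGen.tail hj ?_))
              have hr := hJrange _ hj
              exact Rstep.mk' hr.1 hr.2.2.1 (by omega) hi2 hj2
                (Or.inr ⟨by omega, (hbX i).mp hx⟩)
          · intro i hi1 hi2 hx
            refine (hbSF (i-1) k).mpr ?_
            rintro (hp | hj)
            · exact notBoth hbot hp (P5a hi1 hi2 ((hbX i).mp hx))
            · exact hJneg _ hj (P5a hi1 hi2 ((hbX i).mp hx))
        have he : b (S i0 j0) = false := hent b hsat
        exact (hbSF i0 j0).mp he (Or.inr Relation.ReflTransGen.refl)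
      | inl i0 =>
        have hrg : 1 ≤ i0 ∧ i0 ≤ n := by
          rcases hlv with ⟨i, hi1, hi2, he⟩ | ⟨i, j, h1, h2, h3, h4, he⟩
          · simp only [X, Sum.inl.injEq] at he
            constructor <;> omega
          · exact absurd he (by simp [S])
        have hSeedrange : ∀ q, SeedP n k α i0 q → 1 ≤ q.1 ∧ q.1 < n ∧ 1 ≤ q.2 ∧ q.2 ≤ k := by
          intro q hq
          obtain ⟨h1, h2, h3⟩ := hq
          rcases h3 with h3 | ⟨h3a, h3b, h3c, -⟩ <;>
            exact ⟨by omega, by omega, by omega, by omega⟩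
        have hSeedpull : ∀ q, SeedP n k α i0 q → N n k α (S q.1 q.2) → False := by
          intro q hq hN
          obtain ⟨h1, h2, h3⟩ := hq
          rcases h3 with h3 | ⟨h3a, h3b, h3c, h3d⟩
          · rw [h1, h3] at hN
            exact hlU (P2 hn2 hrg.1 h2 hN)
          · rw [h1] at hN
            exact hlU (P4c (by omega) h2 (by omega) h3c h3d hN)
        have hJneg : ∀ p, J3 n k α i0 p → N n k α (S p.1 p.2) → False := by
          intro p hp hN
          obtain ⟨q, hq, hr⟩ := hp
          exact hSeedpull q hq (rtc_pull (hSeedrange q hq) hr hN)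
        have hJrange : ∀ p, J3 n k α i0 p → 1 ≤ p.1 ∧ p.1 < n ∧ 1 ≤ p.2 ∧ p.2 ≤ k := by
          intro p hp
          obtain ⟨q, hq, hr⟩ := hp
          exact rtc_range hr (hSeedrange q hq)
        have hJmono : ∀ p, J3 n k α i0 p → i0 ≤ p.1 := by
          intro p hp
          obtain ⟨q, hq, hr⟩ := hp
          have h1 := rtc_mono hr
          have h2 := hq.1
          omega
        set b : Seq.V → Bool :=
          Sum.elim (fun i => decide (P n k α (X i) ∨ i = i0))
            (fun p => decide (P n k α (S p.1 p.2) ∨ J3 n k α i0 p)) with hbdef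
        have hbX : ∀ i, b (X i) = true ↔ (P n k α (X i) ∨ i = i0) := by
          intro i; simp [hbdef, X]
          exact decide_eq_true_iff
        have hbS : ∀ i j, b (S i j) = true ↔ (P n k α (S i j) ∨ J3 n k α i0 (i, j)) := by
          intro i j; simp [hbdef, S]
        have hbXF : ∀ i, b (X i) = false ↔ ¬ (P n k α (X i) ∨ i = i0) :=
          fun i => beq_false_iff (hbX i)
        have hbSF : ∀ i j, b (S i j) = false ↔ ¬ (P n k α (S i j) ∨ J3 n k α i0 (i, j)) :=
          fun i j => beq_false_iff (hbS i j)
        have hsat : CNF.Sat b (Phi n k α) := by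
          refine satOf hn2 hk1 b ?_ ?_ ?_ ?_ ?_ ?_
          · intro w hw
            cases w with
            | inl i => exact (hbX i).mpr (Or.inl hw)
            | inr p => exact (hbS p.1 p.2).mpr (Or.inl hw)
          · intro w hw
            cases w with
            | inl i =>
              refine (hbXF i).mpr ?_
              rintro (hp | rfl)
              · exact notBoth hbot hp hw
              · exact hlU hw
            | inr p =>
              refine (hbSF p.1 p.2).mpr ?_
              rintro (hp | hj)
              · exact notBoth hbot hp hw
              · exact hJneg p hj hw
          · intro i hi1 hi2 hx
            rcases (hbX i).mp hx with hp | rfl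
            · exact (hbS i 1).mpr (Or.inl (P1 hn2 hi1 hi2 hp))
            · exact (hbS i 1).mpr (Or.inr ⟨(i, 1), ⟨rfl, hi2, Or.inl rfl⟩,
                Relation.ReflTransGen.refl⟩)
          · intro i j hi1 hi2 hj1 hj2 hs
            rcases (hbS (i-1) j).mp hs with hp | hj
            · exact (hbS i j).mpr (Or.inl (P3p hi1 hi2 hj1 hj2 hp))
            · obtain ⟨q, hq, hr⟩ := hj
              refine (hbS i j).mpr (Or.inr ⟨q, hq, Relation.ReflTransGen.tail hr ?_⟩)
              have hrr := rtc_range hr (hSeedrange q hq)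
              exact Rstep.mk' hrr.1 hj1 (by omega) hi2 hj2 (Or.inl rfl)
          · intro i j hi1 hi2 hj1 hj2 hx hs
            rcases (hbX i).mp hx with hp | rfl
            · rcases (hbS (i-1) (j-1)).mp hs with hp' | hj
              · exact (hbS i j).mpr (Or.inl (P4a hi1 hi2 hj1 hj2 hp hp'))
              · obtain ⟨q, hq, hr⟩ := hj
                refine (hbS i j).mpr (Or.inr ⟨q, hq, Relation.ReflTransGen.tail hr ?_⟩)
                have hrr := rtc_range hr (hSeedrange q hq)
                exact Rstep.mk' hrr.1 hrr.2.2.1 (by omega) hi2 hj2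
                  (Or.inr ⟨by omega, hp⟩)
            · rcases (hbS (i-1) (j-1)).mp hs with hp' | hj
              · exact (hbS i j).mpr (Or.inr ⟨(i, j),
                  ⟨rfl, hi2, Or.inr ⟨by omega, by omega, hj2, hp'⟩⟩,
                  Relation.ReflTransGen.refl⟩)
              · have := hJmono _ hj
                omega
          · intro i hi1 hi2 hx
            rcases (hbX i).mp hx with hp | rfl
            · refine (hbSF (i-1) k).mpr ?_
              rintro (hp' | hj)
              · exact notBoth hbot hp' (P5a hi1 hi2 hp)
              · exact hJneg _ hj (P5a hi1 hi2 hp)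
            · refine (hbSF (i-1) k).mpr ?_
              rintro (hp' | hj)
              · exact hlU (P5b hi1 hi2 hp')
              · have := hJmono _ hj
                omega
        have he : b (X i0) = false := hent b hsat
        exact (hbXF i0).mp he (Or.inr rfl)

end SeqAux
namespace SeqAux
open Seq

lemma evalP {a : V → Bool} {w : V} (h : Lit.eval a (posL w)) : a w = true := h
lemma evalN {a : V → Bool} {w : V} (h : Lit.eval a (negL w)) : a w = false := h

/-- number of true inputs among `x₁,…,x_i` -/
def cnt (g : V → Bool) (i : ℕ) : ℕ :=
  ((Finset.Icc 1 i).filter (fun t => g (X t) = true)).card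

lemma Icc_succ (m : ℕ) : Finset.Icc 1 (m+1) = insert (m+1) (Finset.Icc 1 m) := by
  ext t; simp [Finset.mem_Icc]; omega

lemma cnt_succ_true {g : V → Bool} {m : ℕ} (h : g (X (m+1)) = true) :
    cnt g (m+1) = cnt g m + 1 := by
  unfold cnt
  rw [Icc_succ, Finset.filter_insert, if_pos h, Finset.card_insert_of_notMem]
  intro hmem
  have := Finset.mem_of_mem_filter _ hmem
  simp [Finset.mem_Icc] at this

lemma cnt_succ_false {g : V → Bool} {m : ℕ} (h : g (X (m+1)) = false) :
    cnt g (m+1) = cnt g m := by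
  unfold cnt
  rw [Icc_succ, Finset.filter_insert, if_neg (by simp [h])]

lemma cnt_mono {g : V → Bool} {i i' : ℕ} (h : i ≤ i') : cnt g i ≤ cnt g i' :=
  Finset.card_le_card (Finset.filter_subset_filter _ (Finset.Icc_subset_Icc_right h))

lemma cnt_le {g : V → Bool} (i : ℕ) : cnt g i ≤ i := by
  have h1 := Finset.card_filter_le (Finset.Icc 1 i) (fun t => g (X t) = true)
  have h2 : (Finset.Icc 1 i).card = i := by rw [Nat.card_Icc]; omega
  unfold cnt
  omega

lemma cnt_zero {g : V → Bool} : cnt g 0 = 0 := by simp [cnt]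

lemma cnt_one {g : V → Bool} (h : 1 ≤ cnt g 1) : g (X 1) = true := by
  by_contra hx
  have h0 : cnt g 1 = cnt g 0 := cnt_succ_false (g := g) (m := 0) (bfalse hx)
  rw [cnt_zero] at h0
  omega

lemma encodeForward {n k : ℕ} (hn2 : 2 ≤ n) (hk1 : 1 ≤ k) (a : V → Bool)
    (ham : atMostK n k a) :
    ∃ b : V → Bool, (∀ x ∈ inputs n, b x = a x) ∧ CNF.Sat b (seqCNF n k) := by
  classical
  have ham' : cnt a n ≤ k := ham
  set b : V → Bool := Sum.elim (fun i => a (X i)) (fun p => decide (p.2 ≤ cnt a p.1))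
    with hbdef
  have hbX : ∀ i, b (X i) = a (X i) := fun i => by simp [hbdef, X]
  have hbS : ∀ i j, b (S i j) = true ↔ j ≤ cnt a i := by intro i j; simp [hbdef, S]
  refine ⟨b, fun x hx => ?_, ?_⟩
  · obtain ⟨i, -, -, rfl⟩ := hx
    exact hbX i
  · intro C hC
    simp only [seqCNF, Set.mem_setOf_eq] at hC
    rcases hC with rfl | ⟨j, hj1, hj2, rfl⟩ | ⟨i, hi1, hi2, hC⟩ | rfl
    · -- clause A
      by_cases hx : b (X 1) = true
      · refine sat2R (show Lit.eval b (posL (S 1 1)) from (hbS 1 1).mpr ?_)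
        have hxa : a (X 1) = true := by rw [← hbX 1]; exact hx
        have hc : cnt a 1 = cnt a 0 + 1 := cnt_succ_true (m := 0) hxa
        rw [cnt_zero] at hc
        omega
      · exact sat2L (show Lit.eval b (negL (X 1)) from bfalse hx)
    · -- clause B
      refine sat1 (show Lit.eval b (negL (S 1 j)) from ?_)
      refine (beq_false_iff (hbS 1 j)).mpr ?_
      have := cnt_le (g := a) 1
      omega
    · rcases hC with rfl | rfl | ⟨j, hj1, hj2, (rfl | rfl)⟩ | rfl
      · -- clause C
        by_cases hx : b (X i) = true
        · refine sat2R (show Lit.eval b (posL (S i 1)) from (hbS i 1).mpr ?_)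
          have hxa : a (X i) = true := by rw [← hbX i]; exact hx
          have hc := cnt_succ_true (m := i-1) (by rwa [show i-1+1 = i by omega])
          rw [show i-1+1 = i by omega] at hc
          omega
        · exact sat2L (show Lit.eval b (negL (X i)) from bfalse hx)
      · -- clause D
        by_cases hs : b (S (i-1) 1) = true
        · refine sat2R (show Lit.eval b (posL (S i 1)) from (hbS i 1).mpr ?_)
          have h1 := (hbS (i-1) 1).mp hs
          have h2 := cnt_mono (g := a) (show i-1 ≤ i by omega)
          omega
        · exact sat2L (show Lit.eval b (negL (S (i-1) 1)) from bfalse hs)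
      · -- clause E
        by_cases hx : b (X i) = true
        · by_cases hs : b (S (i-1) (j-1)) = true
          · refine sat3_3 (show Lit.eval b (posL (S i j)) from (hbS i j).mpr ?_)
            have h1 := (hbS (i-1) (j-1)).mp hs
            have hxa : a (X i) = true := by rw [← hbX i]; exact hx
            have hc := cnt_succ_true (m := i-1) (by rwa [show i-1+1 = i by omega])
            rw [show i-1+1 = i by omega] at hc
            omega
          · exact sat3_2 (show Lit.eval b (negL (S (i-1) (j-1))) from bfalse hs)
        · exact sat3_1 (show Lit.eval b (negL (X i)) from bfalse hx)
      · -- clause F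
        by_cases hs : b (S (i-1) j) = true
        · refine sat2R (show Lit.eval b (posL (S i j)) from (hbS i j).mpr ?_)
          have h1 := (hbS (i-1) j).mp hs
          have h2 := cnt_mono (g := a) (show i-1 ≤ i by omega)
          omega
        · exact sat2L (show Lit.eval b (negL (S (i-1) j)) from bfalse hs)
      · -- clause G
        by_cases hx : b (X i) = true
        · refine sat2R (show Lit.eval b (negL (S (i-1) k)) from ?_)
          refine (beq_false_iff (hbS (i-1) k)).mpr ?_
          intro hk'
          have hxa : a (X i) = true := by rw [← hbX i]; exact hx
          have hc := cnt_succ_true (m := i-1) (by rwa [show i-1+1 = i by omega])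
          have h3 := cnt_mono (g := a) (show i ≤ n from le_of_lt hi2)
          rw [show i-1+1 = i by omega] at hc
          omega
        · exact sat2L (show Lit.eval b (negL (X i)) from bfalse hx)
    · -- clause H
      by_cases hx : b (X n) = true
      · refine sat2R (show Lit.eval b (negL (S (n-1) k)) from ?_)
        refine (beq_false_iff (hbS (n-1) k)).mpr ?_
        intro hk'
        have hxa : a (X n) = true := by rw [← hbX n]; exact hx
        have hc := cnt_succ_true (m := n-1) (by rwa [show n-1+1 = n by omega])
        rw [show n-1+1 = n by omega] at hc
        omega
      · exact sat2L (show Lit.eval b (negL (X n)) from bfalse hx)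

lemma encodeBackward {n k : ℕ} (hn2 : 2 ≤ n) (hk1 : 1 ≤ k) (a b : V → Bool)
    (hag : ∀ x ∈ inputs n, b x = a x) (hsat : CNF.Sat b (seqCNF n k)) :
    atMostK n k a := by
  classical
  have getC : ∀ C ∈ seqCNF n k, Clause.Sat b C := hsat
  have main : ∀ i, 1 ≤ i → i < n → ∀ j, 1 ≤ j → j ≤ k → j ≤ cnt b i → b (S i j) = true := by
    intro i
    induction i with
    | zero => omega
    | succ m ih =>
      intro h1 h2 j hj1 hj2 hj3
      by_cases hm : m = 0
      · subst hm
        have hj3' : j ≤ cnt b 1 := hj3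
        have hle := cnt_le (g := b) 1
        have hj : j = 1 := by omega
        subst hj
        have hx : b (X 1) = true := cnt_one (by omega)
        rcases elim2 (getC _ (memA0 (n := n) (k := k))) with h | h
        · have := evalN h; simp [hx] at this
        · exact evalP h
      · have hm1 : 1 ≤ m := by omega
        by_cases hx : b (X (m+1)) = true
        · have hc := cnt_succ_true (g := b) hx
          rcases Nat.lt_or_ge 1 j with hj | hj
          · have hsm : b (S m (j-1)) = true :=
              ih hm1 (by omega) (j-1) (by omega) (by omega) (by omega)
            rcases elim3 (getC _ (memE0 (i := m+1) (j := j) (by omega) h2 hj hj2)) with h | h | h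
            · have := evalN h; simp [hx] at this
            · have := evalN h; simp [hsm] at this
            · exact evalP h
          · have hj' : j = 1 := by omega
            subst hj'
            rcases elim2 (getC _ (memC0 (i := m+1) (by omega) h2)) with h | h
            · have := evalN h; simp [hx] at this
            · exact evalP h
        · have hc := cnt_succ_false (g := b) (bfalse hx)
          have hsm : b (S m j) = true := ih hm1 (by omega) j hj1 hj2 (by omega)
          rcases Nat.lt_or_ge 1 j with hj | hj
          · rcases elim2 (getC _ (memF0 (i := m+1) (j := j) (by omega) h2 hj hj2)) with h | h
            · have := evalN h; simp [hsm] at this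
            · exact evalP h
          · have hj' : j = 1 := by omega
            subst hj'
            rcases elim2 (getC _ (memD0 (i := m+1) (by omega) h2)) with h | h
            · have := evalN h; simp [hsm] at this
            · exact evalP h
  have step : ∀ i, i ≤ n → cnt b i ≤ k := by
    intro i
    induction i with
    | zero => intro _; rw [cnt_zero]; omega
    | succ m ih =>
      intro hin
      have hm := ih (by omega)
      by_cases hx : b (X (m+1)) = true
      · have hc := cnt_succ_true (g := b) hx
        by_cases hlt : cnt b m < k
        · omega
        · have hck : cnt b m = k := by omega
          have hm1 : 1 ≤ m := by
            have := cnt_le (g := b) m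
            omega
          have hbs : b (S m k) = true := main m hm1 (by omega) k hk1 le_rfl (by omega)
          rcases Nat.lt_or_ge (m+1) n with h | h
          · rcases elim2 (getC _ (memG0 (i := m+1) (by omega) h)) with h' | h'
            · have := evalN h'; simp [hx] at this
            · have := evalN h'; simp [hbs] at this
          · have hnn : m+1 = n := by omega
            rcases elim2 (getC _ (memH0 (n := n) (k := k))) with h' | h'
            · have := evalN h'
              rw [hnn] at hx
              simp [hx] at this
            · have := evalN h'
              rw [show n-1 = m by omega] at this
              simp [hbs] at this
      · have hc := cnt_succ_false (g := b) (bfalse hx)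
        omega
  have hbn : cnt b n ≤ k := step n le_rfl
  have hab : cnt a n = cnt b n := by
    unfold cnt
    apply congrArg Finset.card
    apply Finset.filter_congr
    intro t ht
    simp only [Finset.mem_Icc] at ht
    rw [hag (X t) ⟨t, ht.1, ht.2, rfl⟩]
  show cnt a n ≤ k
  omega

end SeqAux
/-- For every `n ≥ 2` and `n ≥ k ≥ 1`, the sequential encoding
`LT_SEQ^{n,k}` of the at-most-`k` constraint on `n` input variables is
propagation complete. -/
theorem stmt0 (n k : ℕ) (hn : 2 ≤ n) (hk1 : 1 ≤ k) (hkn : k ≤ n) :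
    IsEncodingOn (Seq.seqCNF n k) (Seq.inputs n) (Seq.atMostK n k) ∧
    PCon (Seq.seqCNF n k) (Seq.allVars n k) := by
  constructor
  · intro a
    constructor
    · exact fun h => SeqAux.encodeForward hn hk1 a h
    · rintro ⟨b, hag, hsat⟩
      exact SeqAux.encodeBackward hn hk1 a b hag hsat
  · exact SeqAux.pcon hn hk1
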